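/- arXiv:1111.6244 — 2 statements merged into one kernel-verified Lean document; each statement's English description precedes it below -/
import Mathlib

section
/- Let S be a set of a·k random vectors in GF(2)^k, each chosen independently and uniformly at random, where a, b are positive reals with b < a and (a−b)k ≥ k. Then with probability at least 1 − 2^{−k(a − b − 1 − a·h(b/a))}, every subset of S of size (a−b)k has rank k, where h(p) = −p log₂ p − (1−p) log₂(1−p) is the binary entropy function. -/
/-- Binary entropy function with logarithm base 2. -/
noncomputable def binEnt (p : ℝ) : ℝ := -p * Real.logb 2 p - (1 - p) * Real.logb 2 (1 - p)

open Finset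

lemma choose_le_binEnt (n r : ℕ) (hr : r ≤ n) (hn : 0 < n) :
    (n.choose r : ℝ) ≤ 2 ^ ((n : ℝ) * binEnt (r / n)) := by
  rcases Nat.eq_zero_or_pos r with rfl | hr0
  · simp [binEnt]
  rcases eq_or_lt_of_le hr with rfl | hrn
  · have h1 : ((r:ℝ)/r) = 1 := div_self (ne_of_gt (by exact_mod_cast hn))
    rw [h1]
    simp [binEnt]
  set p : ℝ := (r : ℝ) / n with hp
  have hn' : (0:ℝ) < n := by exact_mod_cast hn
  have hp0 : 0 < p := div_pos (by exact_mod_cast hr0) hn'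
  have hp1 : p < 1 := (div_lt_one hn').2 (by exact_mod_cast hrn)
  have hq0 : 0 < 1 - p := by linarith
  have key : p ^ r * (1 - p) ^ (n - r) * (n.choose r : ℝ) ≤ 1 := by
    calc p ^ r * (1 - p) ^ (n - r) * (n.choose r : ℝ)
        ≤ ∑ i ∈ Finset.range (n + 1), p ^ i * (1 - p) ^ (n - i) * (n.choose i : ℝ) := by
          refine Finset.single_le_sum (f := fun i => p ^ i * (1 - p) ^ (n - i) * (n.choose i : ℝ)) (fun i _ => by positivity) ?_
          exact Finset.mem_range.2 (Nat.lt_succ_of_le hr)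
      _ = (p + (1 - p)) ^ n := (add_pow p (1 - p) n).symm
      _ = 1 := by norm_num
  have e1 : p ^ r = (2:ℝ) ^ ((r : ℝ) * Real.logb 2 p) := by
    rw [mul_comm, Real.rpow_mul (by norm_num), Real.rpow_logb (by norm_num) (by norm_num) hp0,
      Real.rpow_natCast]
  have e2 : (1 - p) ^ (n - r) = (2:ℝ) ^ (((n - r : ℕ) : ℝ) * Real.logb 2 (1 - p)) := by
    rw [mul_comm, Real.rpow_mul (by norm_num), Real.rpow_logb (by norm_num) (by norm_num) hq0,
      Real.rpow_natCast]
  have hexp : (r : ℝ) * Real.logb 2 p + ((n - r : ℕ) : ℝ) * Real.logb 2 (1 - p)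
      = -((n : ℝ) * binEnt p) := by
    have h1 : (n : ℝ) * p = r := by rw [hp]; field_simp
    have h2 : ((n - r : ℕ) : ℝ) = n - r := by
      rw [Nat.cast_sub hr]
    rw [binEnt, h2]
    linear_combination (Real.logb 2 (1 - p) - Real.logb 2 p) * h1
  have key2 : (2:ℝ) ^ (-((n:ℝ) * binEnt p)) * (n.choose r : ℝ) ≤ 1 := by
    rw [← hexp, Real.rpow_add (by norm_num)]
    rw [e1, e2] at key
    linarith [key]
  have hpos : (0:ℝ) < 2 ^ ((n:ℝ) * binEnt p) := Real.rpow_pos_of_pos (by norm_num) _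
  calc (n.choose r : ℝ) = (2:ℝ) ^ ((n:ℝ) * binEnt p) * ((2:ℝ) ^ (-((n:ℝ) * binEnt p)) * (n.choose r : ℝ)) := by
        rw [← mul_assoc, ← Real.rpow_add (by norm_num)]
        simp
    _ ≤ 2 ^ ((n:ℝ) * binEnt p) * 1 := by
        exact mul_le_mul_of_nonneg_left key2 (le_of_lt hpos)
    _ = 2 ^ ((n:ℝ) * binEnt p) := mul_one _


lemma dot_single {k : ℕ} (w : Fin k → ZMod 2) (j : Fin k) :
    ∑ i, w i * (Pi.single j 1 : Fin k → ZMod 2) i = w j := by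
  rw [Finset.sum_eq_single j]
  · simp
  · intro i _ hij
    rw [Pi.single_eq_of_ne hij, mul_zero]
  · simp

lemma count_ker {k : ℕ} (hk : 0 < k) (w : Fin k → ZMod 2) (hw : w ≠ 0) :
    (Finset.univ.filter fun x : Fin k → ZMod 2 => ∑ i, w i * x i = 0).card ≤ 2 ^ (k - 1) := by
  classical
  obtain ⟨j, hj⟩ : ∃ j, w j ≠ 0 := by
    by_contra h; push_neg at h; exact hw (funext fun j => h j)
  have hone : ∀ z : ZMod 2, z ≠ 0 → z = 1 := by decide
  set x0 : Fin k → ZMod 2 := Pi.single j 1 with hx0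
  have hdx0 : ∑ i, w i * x0 i = 1 := by rw [hx0, dot_single, hone _ hj]
  set F0 := Finset.univ.filter fun x : Fin k → ZMod 2 => ∑ i, w i * x i = 0 with hF0
  set F1 := Finset.univ.filter fun x : Fin k → ZMod 2 => ∑ i, w i * x i = 1 with hF1
  have hmaps : ∀ x ∈ F0, x + x0 ∈ F1 := by
    intro x hx
    rw [hF0, Finset.mem_filter] at hx
    rw [hF1, Finset.mem_filter]
    refine ⟨Finset.mem_univ _, ?_⟩
    have : ∑ i, w i * (x + x0) i = (∑ i, w i * x i) + ∑ i, w i * x0 i := by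
      rw [← Finset.sum_add_distrib]
      exact Finset.sum_congr rfl fun i _ => by simp [mul_add]
    rw [this, hx.2, hdx0, zero_add]
  have hcard01 : F0.card ≤ F1.card := by
    refine Finset.card_le_card_of_injOn (fun x => x + x0) hmaps ?_
    intro x _ y _ h
    exact by simpa using congrArg (fun z => z + x0) h
  have hdisj : Disjoint F0 F1 := by
    rw [Finset.disjoint_left]
    intro x hx hx'
    rw [hF0, Finset.mem_filter] at hx
    rw [hF1, Finset.mem_filter] at hx'
    rw [hx.2] at hx'
    exact zero_ne_one hx'.2
  have hsum : F0.card + F1.card ≤ 2 ^ k := by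
    rw [← Finset.card_union_of_disjoint hdisj]
    calc (F0 ∪ F1).card ≤ Fintype.card (Fin k → ZMod 2) := Finset.card_le_univ _
      _ = 2 ^ k := by simp [Fintype.card_fun]
  have h2 : 2 * F0.card ≤ 2 * 2 ^ (k - 1) := by
    have : 2 * 2 ^ (k - 1) = 2 ^ k := by
      rw [← pow_succ']
      congr 1
      omega
    omega
  omega

lemma exists_w {k : ℕ} (p : Submodule (ZMod 2) (Fin k → ZMod 2)) (hp : p ≠ ⊤) :
    ∃ w : Fin k → ZMod 2, w ≠ 0 ∧ ∀ x ∈ p, ∑ j, w j * x j = 0 := by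
  obtain ⟨φ, hφ, hker⟩ := p.exists_le_ker_of_lt_top (lt_top_iff_ne_top.2 hp)
  have hs : ∀ i : Fin k, (fun j => if i = j then (1 : ZMod 2) else 0) = Pi.single i 1 := by
    intro i; funext j; rw [Pi.single_apply]; simp [eq_comm]
  have key : ∀ x : Fin k → ZMod 2, φ x = ∑ j, φ (Pi.single j 1) * x j := by
    intro x
    conv_lhs => rw [pi_eq_sum_univ x]
    rw [map_sum]
    refine Finset.sum_congr rfl fun i _ => ?_
    rw [hs i, map_smul, smul_eq_mul, mul_comm]
  refine ⟨fun j => φ (Pi.single j 1), ?_, ?_⟩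
  · intro h0
    apply hφ
    refine LinearMap.ext fun x => ?_
    rw [key x]
    simp only [LinearMap.zero_apply]
    refine Finset.sum_eq_zero fun j _ => ?_
    have : φ (Pi.single j 1) = 0 := congrFun h0 j
    rw [this, zero_mul]
  · intro x hx
    have : φ x = 0 := LinearMap.mem_ker.1 (hker hx)
    rw [← key x, this]

lemma count_pi {k A : ℕ} (S : Finset (Fin A)) (K : Finset (Fin k → ZMod 2)) :
    (Finset.univ.filter fun v : Fin A → (Fin k → ZMod 2) => ∀ i ∈ S, v i ∈ K).card
      ≤ K.card ^ S.card * (2 ^ k) ^ (A - S.card) := by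
  classical
  have hsub : (Finset.univ.filter fun v : Fin A → (Fin k → ZMod 2) => ∀ i ∈ S, v i ∈ K)
      ⊆ Fintype.piFinset (fun i => if i ∈ S then K else Finset.univ) := by
    intro v hv
    rw [Finset.mem_filter] at hv
    rw [Fintype.mem_piFinset]
    intro i
    by_cases hi : i ∈ S
    · simpa [hi] using hv.2 i hi
    · simp [hi]
  refine (Finset.card_le_card hsub).trans ?_
  rw [Fintype.card_piFinset]
  have : ∀ i : Fin A, (if i ∈ S then K else (Finset.univ : Finset (Fin k → ZMod 2))).card
      = if i ∈ S then K.card else 2 ^ k := by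
    intro i
    split_ifs
    · rfl
    · simp [Fintype.card_fun]
  rw [Finset.prod_congr rfl fun i _ => this i, Finset.prod_ite, Finset.prod_const,
    Finset.prod_const]
  have h1 : (Finset.univ.filter (· ∈ S)).card = S.card := by
    congr 1
    simp [Finset.filter_mem_eq_inter]
  have h2 : (Finset.univ.filter (¬ · ∈ S)).card = A - S.card := by
    have := Finset.card_filter_add_card_filter_not (s := (Finset.univ : Finset (Fin A)))
      (p := (· ∈ S))
    simp only [Finset.card_univ, Fintype.card_fin] at this
    omega
  rw [h1, h2]


/-- Let S be a set of a·k independent uniformly random vectors in GF(2)^k, with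
a, b positive reals, b < a and (a−b)k ≥ k. With probability at least
1 − 2^{−k(a − b − 1 − a·h(b/a))}, every subset of S of size (a−b)k has rank k.
Here A = a·k and B = b·k, and we count the favorable tuples among all 2^(k·A) tuples. -/
theorem stmt_7 (k A B : ℕ) (a b : ℝ) (hb : 0 < b) (hab : b < a)
    (hA : (A : ℝ) = a * k) (hB : (B : ℝ) = b * k) (hk : k ≤ A - B) :
    (1 - (2 : ℝ) ^ (-(k : ℝ) * (a - b - 1 - a * binEnt (b / a)))) * 2 ^ (k * A)
      ≤ (Nat.card {v : Fin A → (Fin k → ZMod 2) //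
          ∀ S : Finset (Fin A), S.card = A - B →
            Module.finrank (ZMod 2) (Submodule.span (ZMod 2) (v '' ↑S)) = k} : ℝ) := by
  classical
  rcases Nat.eq_zero_or_pos k with rfl | hk0
  · have h0 : (-((0:ℕ):ℝ)) * (a - b - 1 - a * binEnt (b / a)) = 0 := by norm_num
    rw [h0, Real.rpow_zero]
    norm_num
  have hone : (1:ℕ) ≤ k := hk0
  have hk' : (0:ℝ) < k := by exact_mod_cast hk0
  have ha : 0 < a := lt_trans hb hab
  have hBA : B < A := by
    have : (B:ℝ) < A := by rw [hA, hB]; exact mul_lt_mul_of_pos_right hab hk'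
    exact_mod_cast this
  have hBA' : B ≤ A := le_of_lt hBA
  set m := A - B with hm
  have hmcast : (m:ℝ) = (a - b) * k := by
    rw [hm, Nat.cast_sub hBA', hA, hB]; ring
  have hA0 : 0 < A := lt_of_lt_of_le hk0 (le_trans hk (Nat.sub_le A B))
  have hcardV : Fintype.card (Fin k → ZMod 2) = 2 ^ k := by simp [Fintype.card_fun]
  set P : (Fin A → (Fin k → ZMod 2)) → Prop := fun v =>
    ∀ S : Finset (Fin A), S.card = A - B →
      Module.finrank (ZMod 2) (Submodule.span (ZMod 2) (v '' ↑S)) = k with hP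
  show (1 - (2 : ℝ) ^ (-(k : ℝ) * (a - b - 1 - a * binEnt (b / a)))) * 2 ^ (k * A)
      ≤ (Nat.card {v : Fin A → (Fin k → ZMod 2) // P v} : ℝ)
  have hNatCard : Nat.card {v : Fin A → (Fin k → ZMod 2) // P v}
      = (Finset.univ.filter P).card := by
    rw [Nat.card_eq_fintype_card, Fintype.card_subtype]
  have htotal : (Finset.univ.filter P).card
      + (Finset.univ.filter fun v => ¬ P v).card = 2 ^ (k * A) := by
    rw [Finset.card_filter_add_card_filter_not, Finset.card_univ]
    rw [Fintype.card_fun, hcardV, Fintype.card_fin, ← pow_mul]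
  -- the bad set is covered by the union over subsets S and nonzero w
  have hbadsub : (Finset.univ.filter fun v => ¬ P v) ⊆
      (Finset.univ.powersetCard m).biUnion fun S =>
        (Finset.univ.filter fun w : Fin k → ZMod 2 => w ≠ 0).biUnion fun w =>
          Finset.univ.filter fun v : Fin A → (Fin k → ZMod 2) =>
            ∀ i ∈ S, v i ∈ Finset.univ.filter
              fun x : Fin k → ZMod 2 => ∑ jj, w jj * x jj = 0 := by
    intro v hv
    rw [Finset.mem_filter] at hv
    have hv2 : ¬ ∀ S : Finset (Fin A), S.card = A - B →
        Module.finrank (ZMod 2) (Submodule.span (ZMod 2) (v '' ↑S)) = k := hv.2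
    push_neg at hv2
    obtain ⟨S, hS, hrank⟩ := hv2
    have hspan : Submodule.span (ZMod 2) (v '' ↑S) ≠ ⊤ := by
      intro htop
      apply hrank
      rw [htop, finrank_top]
      simp
    obtain ⟨w, hw0, hwz⟩ := exists_w _ hspan
    rw [Finset.mem_biUnion]
    refine ⟨S, by rw [Finset.mem_powersetCard]; exact ⟨Finset.subset_univ S, hS⟩, ?_⟩
    rw [Finset.mem_biUnion]
    refine ⟨w, by simp [hw0], ?_⟩
    rw [Finset.mem_filter]
    refine ⟨Finset.mem_univ _, fun i hi => ?_⟩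
    rw [Finset.mem_filter]
    exact ⟨Finset.mem_univ _, hwz (v i) (Submodule.subset_span ⟨i, hi, rfl⟩)⟩
  -- cardinality bound for the bad set
  have hbadcard : (Finset.univ.filter fun v => ¬ P v).card
      ≤ A.choose m * (2 ^ k * ((2 ^ (k - 1)) ^ m * (2 ^ k) ^ (A - m))) := by
    refine (Finset.card_le_card hbadsub).trans ?_
    refine Finset.card_biUnion_le.trans ?_
    calc ∑ S ∈ Finset.univ.powersetCard m,
          (((Finset.univ.filter fun w : Fin k → ZMod 2 => w ≠ 0).biUnion fun w =>
            Finset.univ.filter fun v : Fin A → (Fin k → ZMod 2) =>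
            ∀ i ∈ S, v i ∈ Finset.univ.filter
              fun x : Fin k → ZMod 2 => ∑ jj, w jj * x jj = 0)).card
        ≤ ∑ _S ∈ Finset.univ.powersetCard m,
            (2 ^ k * ((2 ^ (k - 1)) ^ m * (2 ^ k) ^ (A - m))) := by
          refine Finset.sum_le_sum fun S hS => ?_
          have hScard : S.card = m := (Finset.mem_powersetCard.1 hS).2
          refine Finset.card_biUnion_le.trans ?_
          have hwbound : ∀ w ∈ (Finset.univ.filter fun w : Fin k → ZMod 2 => w ≠ 0),
              (Finset.univ.filter fun v : Fin A → (Fin k → ZMod 2) =>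
                ∀ i ∈ S, v i ∈ Finset.univ.filter
                  fun x : Fin k → ZMod 2 => ∑ jj, w jj * x jj = 0).card
              ≤ (2 ^ (k - 1)) ^ m * (2 ^ k) ^ (A - m) := by
            intro w hw
            rw [Finset.mem_filter] at hw
            refine (count_pi S _).trans ?_
            rw [hScard]
            exact Nat.mul_le_mul_right _ (Nat.pow_le_pow_left (count_ker hk0 w hw.2) m)
          refine (Finset.sum_le_card_nsmul _ _ _ hwbound).trans ?_
          rw [smul_eq_mul]
          refine Nat.mul_le_mul_right _ ?_
          calc (Finset.univ.filter fun w : Fin k → ZMod 2 => w ≠ 0).card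
              ≤ (Finset.univ : Finset (Fin k → ZMod 2)).card := Finset.card_filter_le _ _
            _ = 2 ^ k := by rw [Finset.card_univ, hcardV]
      _ = A.choose m * (2 ^ k * ((2 ^ (k - 1)) ^ m * (2 ^ k) ^ (A - m))) := by
          rw [Finset.sum_const, smul_eq_mul, Finset.card_powersetCard, Finset.card_univ,
            Fintype.card_fin]
  -- pass to the reals
  set E : ℕ := k + (k - 1) * m + k * (A - m) with hE
  have hpowE : 2 ^ k * ((2 ^ (k - 1)) ^ m * (2 ^ k) ^ (A - m)) = 2 ^ E := by
    rw [hE, pow_add, pow_add, pow_mul, pow_mul, mul_assoc]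
  have hAm : A - m = B := Nat.sub_sub_self hBA'
  have hEcast : ((E : ℕ) : ℝ)
      = (k : ℝ) + ((k : ℝ) - 1) * ((a - b) * k) + (k : ℝ) * (b * k) := by
    rw [hE, hAm]
    push_cast [Nat.cast_sub hone]
    rw [hmcast, hB]
  have hdiv : ((B : ℝ) / (A : ℝ)) = b / a := by
    rw [hA, hB, mul_div_mul_right _ _ (ne_of_gt hk')]
  have hchoose : (A.choose m : ℝ) ≤ 2 ^ ((A : ℝ) * binEnt (b / a)) := by
    rw [hm, Nat.choose_symm hBA']
    have := choose_le_binEnt A B hBA' hA0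
    rwa [hdiv] at this
  have hexp : (A : ℝ) * binEnt (b / a) + (E : ℝ)
      = (-(k : ℝ) * (a - b - 1 - a * binEnt (b / a))) + ((k * A : ℕ) : ℝ) := by
    rw [hEcast, Nat.cast_mul, hA]
    ring
  have hreal : ((Finset.univ.filter fun v => ¬ P v).card : ℝ)
      ≤ (2 : ℝ) ^ (-(k : ℝ) * (a - b - 1 - a * binEnt (b / a))) * 2 ^ (k * A) := by
    calc ((Finset.univ.filter fun v => ¬ P v).card : ℝ)
        ≤ (A.choose m : ℝ) * (2 : ℝ) ^ ((E : ℕ) : ℝ) := by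
          rw [Real.rpow_natCast]
          exact_mod_cast hbadcard.trans_eq (by rw [hpowE])
      _ ≤ (2 : ℝ) ^ ((A : ℝ) * binEnt (b / a)) * (2 : ℝ) ^ ((E : ℕ) : ℝ) := by
          exact mul_le_mul_of_nonneg_right hchoose
            (le_of_lt (Real.rpow_pos_of_pos (by norm_num) _))
      _ = (2 : ℝ) ^ ((A : ℝ) * binEnt (b / a) + (E : ℝ)) :=
          (Real.rpow_add (by norm_num) _ _).symm
      _ = (2 : ℝ) ^ (-(k : ℝ) * (a - b - 1 - a * binEnt (b / a))) * 2 ^ (k * A) := by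
          rw [hexp, Real.rpow_add (by norm_num), Real.rpow_natCast]
  rw [hNatCard]
  have hgoodcast : ((Finset.univ.filter P).card : ℝ)
      = 2 ^ (k * A) - ((Finset.univ.filter fun v => ¬ P v).card : ℝ) := by
    have h := congrArg (fun n : ℕ => (n : ℝ)) htotal
    push_cast at h
    linarith
  rw [hgoodcast]
  nlinarith [hreal, Real.rpow_pos_of_pos (show (0:ℝ) < 2 by norm_num)
    (-(k : ℝ) * (a - b - 1 - a * binEnt (b / a)))]
end

section
/- Let A be an N×k matrix over GF(2) and b ∈ GF(2)^N with N = k + 2f + ε, where f < k and ε ≥ 0. Suppose there exists x₀ ∈ GF(2)^k and a set G of row indices with |G| ≥ k + f + ε ('uncorrupted rows') such that A_i · x₀ = b_i for all i ∈ G, and suppose every subset of G of size k + ε contains k linearly independent rows of A. Then x₀ is the unique vector x ∈ GF(2)^k satisfying A_i · x = b_i for at least k + f + ε row indices i. -/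
open Matrix in

/-- Exhaustive-search decoding against a uniform adversary: with N = k + 2f + ε rows,
f < k, a set G of at least k + f + ε uncorrupted rows satisfying A_i · x₀ = b_i, and
every (k+ε)-subset of G containing k linearly independent rows, x₀ is the unique vector
satisfying at least k + f + ε of the equations A_i · x = b_i. -/
theorem stmt_9 (k f ε N : ℕ) (hN : N = k + 2 * f + ε) (hf : f < k)
    (A : Matrix (Fin N) (Fin k) (ZMod 2)) (b : Fin N → ZMod 2)
    (x₀ : Fin k → ZMod 2) (G : Finset (Fin N)) (hG : k + f + ε ≤ G.card)
    (hsat : ∀ i ∈ G, A.mulVec x₀ i = b i)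
    (hindep : ∀ T ⊆ G, T.card = k + ε →
      ∃ T' ⊆ T, T'.card = k ∧ LinearIndependent (ZMod 2) (fun i : {x // x ∈ T'} => A i.1)) :
    ∀ x : Fin k → ZMod 2,
      k + f + ε ≤ (Finset.univ.filter (fun i => A.mulVec x i = b i)).card → x = x₀ := by
  intro x hx
  set S := Finset.univ.filter (fun i => A.mulVec x i = b i) with hS
  have hunion : (G ∪ S).card ≤ N := by
    simpa using (Finset.card_le_card (Finset.subset_univ (G ∪ S)))
  have hcard : k + ε ≤ (G ∩ S).card := by
    have := Finset.card_inter_add_card_union G S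
    omega
  obtain ⟨T, hTsub, hTcard⟩ := Finset.exists_subset_card_eq hcard
  obtain ⟨T', hT'sub, hT'card, hli⟩ :=
    hindep T (hTsub.trans Finset.inter_subset_left) hTcard
  -- rows in T' satisfy both equations
  set y := x - x₀ with hy
  have hzero : ∀ i ∈ T', A i ⬝ᵥ y = 0 := by
    intro i hi
    have hiT := hT'sub hi
    have hiG : i ∈ G := Finset.inter_subset_left (hTsub hiT)
    have hiS : i ∈ S := Finset.inter_subset_right (hTsub hiT)
    have h1 : A.mulVec x i = b i := by
      simpa [hS] using hiS
    have h2 : A.mulVec x₀ i = b i := hsat i hiG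
    have : A i ⬝ᵥ x - A i ⬝ᵥ x₀ = 0 := by
      simp only [Matrix.mulVec, dotProduct] at h1 h2 ⊢
      rw [h1, h2, sub_self]
    simpa [hy, dotProduct_sub] using this
  -- linear functional v ↦ v ⬝ᵥ y
  let φ : (Fin k → ZMod 2) →ₗ[ZMod 2] ZMod 2 :=
    { toFun := fun v => v ⬝ᵥ y
      map_add' := fun u v => by simp [add_dotProduct]
      map_smul' := fun c v => by simp [smul_dotProduct] }
  have hne : Nonempty {x // x ∈ T'} := by
    have : 0 < T'.card := by omega
    obtain ⟨i, hi⟩ := Finset.card_pos.mp this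
    exact ⟨⟨i, hi⟩⟩
  have hspan : Submodule.span (ZMod 2)
      (Set.range (fun i : {x // x ∈ T'} => A i.1)) = ⊤ := by
    apply LinearIndependent.span_eq_top_of_card_eq_finrank hli
    simp [Fintype.card_coe, hT'card]
  have hφ : φ = 0 := by
    apply LinearMap.ext
    intro v
    have hv : v ∈ Submodule.span (ZMod 2)
        (Set.range (fun i : {x // x ∈ T'} => A i.1)) := by
      rw [hspan]; trivial
    have : Submodule.span (ZMod 2)
        (Set.range (fun i : {x // x ∈ T'} => A i.1)) ≤ LinearMap.ker φ := by
      rw [Submodule.span_le]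
      rintro _ ⟨⟨i, hi⟩, rfl⟩
      exact hzero i hi
    simpa using this hv
  have hyzero : y = 0 := by
    funext j
    have := congrArg (fun ψ => ψ (Pi.single j 1)) hφ
    simpa [φ, single_dotProduct] using this
  have : x - x₀ = 0 := hyzero
  exact sub_eq_zero.mp this
end
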